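/- In an algebraic lattice L, if x and y are compact elements and the residual x∖y exists (the least z with x ≤ y ∨ z), then x∖y is compact. -/

import Mathlib

/-- In an algebraic (i.e., compactly generated complete) lattice, the residual
of two compact elements, when it exists, is compact. -/
theorem residual_compact_of_compact {L : Type*} [CompleteLattice L]
    [IsCompactlyGenerated L] (x y r : L)
    (hx : IsCompactElement x)
    (hy : IsCompactElement y)
    (hr : x ≤ y ⊔ r ∧ ∀ z : L, x ≤ y ⊔ z → r ≤ z) :
    IsCompactElement r := by
  classical
  obtain ⟨hxr, hmin⟩ := hr
  set S : Set L := {c | IsCompactElement c ∧ c ≤ r} with hS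
  have hsup : sSup S = r := sSup_compact_le_eq r
  have hx' : x ≤ sSup (insert y S) := by
    rw [sSup_insert, hsup]; exact hxr
  obtain ⟨t, hts, hxt⟩ := (CompleteLattice.isCompactElement_iff_exists_le_sSup_of_le_sSup L x).mp hx (insert y S) hx'
  -- r ≤ sup of (t.erase y), a finite set of compacts
  set t' := t.erase y with ht'
  have ht'S : ∀ c ∈ t', c ∈ S := by
    intro c hc
    have hct := Finset.mem_of_mem_erase hc
    rcases hts hct with h | h
    · exact absurd h (Finset.ne_of_mem_erase hc)
    · exact h
  have hxle : x ≤ y ⊔ t'.sup id := by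
    refine le_trans hxt (Finset.sup_le fun c hc => ?_)
    rcases hts hc with h | h
    · simp [h]
    · by_cases hcy : c = y
      · simp [hcy]
      · exact le_sup_of_le_right (Finset.le_sup (f := id) (Finset.mem_erase.mpr ⟨hcy, hc⟩))
  have hr1 : r ≤ t'.sup id := hmin _ hxle
  have hr2 : t'.sup id ≤ r := Finset.sup_le fun c hc => (ht'S c hc).2
  have : r = t'.sup id := le_antisymm hr1 hr2
  rw [this]
  exact CompleteLattice.isCompactElement_finsetSup t' (fun c hc => (ht'S c hc).1)
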